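/- (Weak Bohr theorem for slice regular functions.) Let a : ℕ → ℍ and f : ℍ → ℍ satisfy the Bohr hypotheses. Then for every q ∈ ℍ with ‖q‖ ≤ 1/6, the family (fun n => ‖qⁿ · a n‖) is summable and ∑' n, ‖qⁿ · a n‖ < 1. -/

import Mathlib

local notation "ℍ" => Quaternion ℝ

/-- `(f, a)` satisfies the Bohr hypotheses: `f` is continuous on the closed unit ball,
agrees with the power series `∑ qⁿ · a n` on the open unit ball, and `‖f‖ < 1` on the
closed unit ball. -/
def BohrHypotheses (f : ℍ → ℍ) (a : ℕ → ℍ) : Prop :=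
  ContinuousOn f {q : ℍ | ‖q‖ ≤ 1} ∧
  (∀ q : ℍ, ‖q‖ < 1 → HasSum (fun n => q ^ n * a n) (f q)) ∧
  (∀ q : ℍ, ‖q‖ ≤ 1 → ‖f q‖ < 1)

lemma sq_neg_one_structure (I' : ℍ) (hI : I' * I' = -1) : I'.re = 0 ∧ ‖I'‖ = 1 := by
  have h1 : (I' * I').re = -1 := by rw [hI]; simp [Quaternion.re_one]
  have h2 : (I' * I').imI = 0 := by rw [hI]; simp [Quaternion.imI_one]
  have h3 : (I' * I').imJ = 0 := by rw [hI]; simp [Quaternion.imJ_one]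
  have h4 : (I' * I').imK = 0 := by rw [hI]; simp [Quaternion.imK_one]
  rw [Quaternion.re_mul] at h1
  rw [Quaternion.imI_mul] at h2
  rw [Quaternion.imJ_mul] at h3
  rw [Quaternion.imK_mul] at h4
  have hre : I'.re = 0 := by nlinarith [sq_nonneg I'.re, sq_nonneg I'.imI, sq_nonneg I'.imJ, sq_nonneg I'.imK]
  refine ⟨hre, ?_⟩
  have hns : Quaternion.normSq I' = 1 := by
    rw [Quaternion.normSq_def']; nlinarith
  have h5 := Quaternion.normSq_eq_norm_mul_self I'
  nlinarith [norm_nonneg I']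

lemma normSq_one_of_sq_neg_one (I' : ℍ) (hI : I' * I' = -1) :
    I'.imI ^ 2 + I'.imJ ^ 2 + I'.imK ^ 2 = 1 := by
  obtain ⟨hre, hn⟩ := sq_neg_one_structure I' hI
  have := Quaternion.normSq_eq_norm_mul_self I'
  rw [hn, Quaternion.normSq_def'] at this
  nlinarith

lemma norm_liftAux (I' : ℍ) (hI : I' * I' = -1) (z : ℂ) :
    ‖Complex.liftAux I' hI z‖ = ‖z‖ := by
  obtain ⟨hre, hn⟩ := sq_neg_one_structure I' hI
  have hs := normSq_one_of_sq_neg_one I' hI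
  rw [Complex.liftAux_apply]
  have hsq : Quaternion.normSq (algebraMap ℝ ℍ z.re + z.im • I') = z.re^2 + z.im^2 := by
    rw [Quaternion.normSq_def']
    simp only [Quaternion.re_add, Quaternion.imI_add, Quaternion.imJ_add, Quaternion.imK_add,
      Quaternion.re_smul, Quaternion.imI_smul, Quaternion.imJ_smul, Quaternion.imK_smul,
      Quaternion.algebraMap_def, Quaternion.re_coe, Quaternion.imI_coe, Quaternion.imJ_coe,
      Quaternion.imK_coe, hre, smul_eq_mul, mul_zero, add_zero, zero_add]
    linear_combination (z.im ^ 2) * hs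
  have h2 := Quaternion.normSq_eq_norm_mul_self (algebraMap ℝ ℍ z.re + z.im • I')
  rw [hsq] at h2
  have h3 : ‖z‖ * ‖z‖ = z.re^2 + z.im^2 := by
    have := Complex.sq_norm z
    rw [Complex.normSq_apply] at this
    nlinarith
  nlinarith [norm_nonneg (algebraMap ℝ ℍ z.re + z.im • I'), norm_nonneg z]

lemma exists_lift_eq (v : ℍ) (hv : ‖v‖ = 1) :
    ∃ (I' : ℍ) (hI' : I' * I' = -1) (lam : ℂ),
      ‖lam‖ = 1 ∧ Complex.liftAux I' hI' lam = v := by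
  by_cases him : v.im = 0
  · have hvre : v = ((v.re : ℝ) : ℍ) := by
      conv_lhs => rw [← Quaternion.re_add_im v]
      rw [him, add_zero]
    refine ⟨(show ℍ from ⟨0,1,0,0⟩), ?_, ((v.re : ℝ) : ℂ), ?_, ?_⟩
    · show (⟨0,1,0,0⟩ : ℍ) * ⟨0,1,0,0⟩ = -1
      ext <;> norm_num [Quaternion.re_mul, Quaternion.imI_mul, Quaternion.imJ_mul, Quaternion.imK_mul,
        Quaternion.re_one, Quaternion.imI_one, Quaternion.imJ_one, Quaternion.imK_one,
        QuaternionAlgebra.re_mul, QuaternionAlgebra.imI_mul, QuaternionAlgebra.imJ_mul,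
        QuaternionAlgebra.imK_mul]
    · rw [hvre, Quaternion.norm_coe, Real.norm_eq_abs] at hv
      rw [Complex.norm_real, Real.norm_eq_abs]; exact hv
    · rw [Complex.liftAux_apply]
      simp only [Complex.ofReal_re, Complex.ofReal_im, zero_smul, add_zero]
      rw [Quaternion.algebraMap_def]
      show (v.re : ℍ) + (0:ℝ) • (show ℍ from ⟨0,1,0,0⟩) = v
      rw [zero_smul, add_zero]
      exact hvre.symm
  · set n : ℝ := ‖v.im‖ with hn
    have hn0 : 0 < n := by
      rw [hn]; exact norm_pos_iff.mpr him
    have hnsq : Quaternion.normSq v.im = n * n := Quaternion.normSq_eq_norm_mul_self _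
    have hvsq : v.re ^ 2 + n ^ 2 = 1 := by
      have h1 : Quaternion.normSq v = 1 := by
        rw [Quaternion.normSq_eq_norm_mul_self, hv]; ring
      rw [Quaternion.normSq_def'] at h1
      rw [Quaternion.normSq_def'] at hnsq
      simp only [Quaternion.re_im, Quaternion.imI_im, Quaternion.imJ_im, Quaternion.imK_im] at hnsq
      nlinarith
    refine ⟨n⁻¹ • v.im, ?_, ⟨v.re, n⟩, ?_, ?_⟩
    · rw [smul_mul_smul_comm]
      have h2 : v.im * v.im = -((Quaternion.normSq v.im : ℝ) : ℍ) := by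
        have := Quaternion.im_sq v
        rwa [pow_two] at this
      rw [h2, hnsq, smul_neg]
      have : (n⁻¹ * n⁻¹) • ((n * n : ℝ) : ℍ) = ((1:ℝ) : ℍ) := by
        rw [Quaternion.smul_coe]
        congr 1
        field_simp
      rw [this]; simp
    · simp only [Complex.norm_def, Complex.normSq_apply]
      rw [Real.sqrt_eq_one]
      nlinarith
    · rw [Complex.liftAux_apply]
      show (algebraMap ℝ ℍ) v.re + n • (n⁻¹ • v.im) = v
      rw [smul_smul, mul_inv_cancel₀ hn0.ne', one_smul, Quaternion.algebraMap_def]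
      exact Quaternion.re_add_im v

lemma root_sum (m : ℕ) (hm : m ≠ 0) (N : ℕ) :
    ∑ k ∈ Finset.range m, (Complex.exp (2 * Real.pi * Complex.I / m) ^ N) ^ k
      = if m ∣ N then (m : ℂ) else 0 := by
  have hprim := Complex.isPrimitiveRoot_exp m hm
  by_cases h : m ∣ N
  · rw [if_pos h, (hprim.pow_eq_one_iff_dvd N).mpr h]
    simp
  · rw [if_neg h]
    have hne : Complex.exp (2 * Real.pi * Complex.I / m) ^ N ≠ 1 := by
      rw [Ne, hprim.pow_eq_one_iff_dvd N]; exact h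
    rw [geom_sum_eq hne]
    rw [← pow_mul, mul_comm N m, pow_mul, hprim.pow_eq_one, one_pow, sub_self, zero_div]

lemma avg_hasSum (a : ℕ → ℍ) (f : ℍ → ℍ)
    (hsum : ∀ q : ℍ, ‖q‖ < 1 → HasSum (fun j => q ^ j * a j) (f q))
    (I' : ℍ) (hI' : I' * I' = -1) (r : ℝ) (hr0 : 0 ≤ r) (hr1 : r < 1)
    (K : ℕ → ℝ) (m : ℕ) (hm : m ≠ 0) (z : ℕ → ℂ) (hz : ∀ k, ‖z k‖ = 1) :
    HasSum
      (fun j => Complex.liftAux I' hI' ((r:ℂ)^j * ∑ k ∈ Finset.range m, ((K k : ℂ)/m) * (z k)^j) * a j)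
      (∑ k ∈ Finset.range m, (K k / m) • f (Complex.liftAux I' hI' ((r:ℂ) * z k))) := by
  set Φ := Complex.liftAux I' hI' with hΦ
  have hq : ∀ k, ‖Φ ((r:ℂ) * z k)‖ < 1 := by
    intro k
    rw [norm_liftAux, norm_mul, hz k, mul_one, Complex.norm_real, Real.norm_eq_abs, abs_of_nonneg hr0]
    exact hr1
  have h1 : ∀ k, HasSum (fun j => (K k / m) • (Φ (((r:ℂ) * z k)^j) * a j))
      ((K k / m) • f (Φ ((r:ℂ) * z k))) := by
    intro k
    have := (hsum _ (hq k)).const_smul (K k / m)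
    convert this using 2 with j
    rw [map_pow]
  have h2 := hasSum_sum (f := fun k j => (K k / m) • (Φ (((r:ℂ) * z k)^j) * a j))
    (s := Finset.range m) (a := fun k => (K k / m) • f (Φ ((r:ℂ) * z k)))
    (fun k _ => h1 k)
  convert h2 using 2 with j
  rw [Finset.mul_sum, map_sum, Finset.sum_mul]
  refine Finset.sum_congr rfl fun k _ => ?_
  rw [← smul_mul_assoc]
  congr 1
  rw [show (K k / (m:ℝ)) • Φ (((r:ℂ) * z k)^j) = Φ ((K k / (m:ℝ)) • (((r:ℂ) * z k)^j)) from
    (map_smul Φ _ _).symm]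
  congr 1
  rw [Complex.real_smul, mul_pow]
  push_cast
  ring

lemma abs_zeta_pow (m : ℕ) (hm : m ≠ 0) (N : ℕ) :
    ‖Complex.exp (2 * Real.pi * Complex.I / m) ^ N‖ = 1 := by
  rw [norm_pow]
  have : ‖Complex.exp (2 * Real.pi * Complex.I / m)‖ = 1 := by
    rw [Complex.norm_exp]
    have : (2 * Real.pi * Complex.I / m).re = 0 := by
      simp [Complex.div_re]
    rw [this, Real.exp_zero]
  rw [this, one_pow]

lemma coeff_eval (m n : ℕ) (hm : m ≠ 0) (hnm : n ≤ m) (lam : ℂ) (j : ℕ) :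
    (∑ k ∈ Finset.range m,
        ((((1 - (lam * (Complex.exp (2 * Real.pi * Complex.I / m) ^ n) ^ k).re : ℝ)) : ℂ) / m) *
          (Complex.exp (2 * Real.pi * Complex.I / m) ^ k) ^ j)
    = (if m ∣ j then 1 else 0) - (lam / 2) * (if m ∣ (n + j) then 1 else 0)
      - ((starRingEnd ℂ) lam / 2) * (if m ∣ (m - n + j) then 1 else 0) := by
  set ζ : ℂ := Complex.exp (2 * Real.pi * Complex.I / m) with hζ
  have hmC : (m : ℂ) ≠ 0 := Nat.cast_ne_zero.mpr hm
  have hζm : ζ ^ m = 1 := (Complex.isPrimitiveRoot_exp m hm).pow_eq_one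
  have hconj : ∀ k : ℕ, (starRingEnd ℂ) ((ζ ^ n) ^ k) = (ζ ^ (m - n)) ^ k := by
    intro k
    have habs : ‖(ζ ^ n) ^ k‖ = 1 := by
      rw [← pow_mul]; exact abs_zeta_pow m hm (n * k)
    have hmul : (ζ ^ n) ^ k * (ζ ^ (m - n)) ^ k = 1 := by
      rw [← mul_pow, ← pow_add, Nat.add_sub_cancel' hnm, ← pow_mul, pow_mul, hζm, one_pow]
    have h1 : (starRingEnd ℂ) ((ζ ^ n) ^ k) * ((ζ ^ n) ^ k) = 1 := by
      rw [mul_comm, Complex.mul_conj', habs]; norm_num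
    calc (starRingEnd ℂ) ((ζ ^ n) ^ k)
        = (starRingEnd ℂ) ((ζ ^ n) ^ k) * ((ζ ^ n) ^ k * (ζ ^ (m - n)) ^ k) := by
          rw [hmul, mul_one]
      _ = ((starRingEnd ℂ) ((ζ ^ n) ^ k) * (ζ ^ n) ^ k) * (ζ ^ (m - n)) ^ k := by ring
      _ = (ζ ^ (m - n)) ^ k := by rw [h1, one_mul]
  have hterm : ∀ k : ℕ,
      ((((1 - (lam * (ζ ^ n) ^ k).re : ℝ)) : ℂ) / m) * (ζ ^ k) ^ j
      = (1 / m) * (ζ ^ j) ^ k - (lam / (2 * m)) * (ζ ^ (n + j)) ^ k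
        - ((starRingEnd ℂ) lam / (2 * m)) * (ζ ^ (m - n + j)) ^ k := by
    intro k
    have hre : (((lam * (ζ ^ n) ^ k).re : ℝ) : ℂ)
        = (lam * (ζ ^ n) ^ k + (starRingEnd ℂ) lam * (ζ ^ (m - n)) ^ k) / 2 := by
      have := Complex.add_conj (lam * (ζ ^ n) ^ k)
      rw [map_mul, hconj k] at this
      rw [eq_div_iff (two_ne_zero : (2:ℂ) ≠ 0), this]
      push_cast
      ring
    have hpow1 : (ζ ^ (n + j)) ^ k = (ζ ^ n) ^ k * (ζ ^ j) ^ k := by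
      rw [← mul_pow, ← pow_add]
    have hpow2 : (ζ ^ (m - n + j)) ^ k = (ζ ^ (m - n)) ^ k * (ζ ^ j) ^ k := by
      rw [← mul_pow, ← pow_add]
    have hpow3 : (ζ ^ k) ^ j = (ζ ^ j) ^ k := by rw [← pow_mul, mul_comm, pow_mul]
    push_cast
    rw [hre, hpow1, hpow2, hpow3]
    field_simp
    ring
  rw [Finset.sum_congr rfl (fun k _ => hterm k)]
  rw [Finset.sum_sub_distrib, Finset.sum_sub_distrib, ← Finset.mul_sum, ← Finset.mul_sum,
    ← Finset.mul_sum, root_sum m hm j, root_sum m hm (n + j), root_sum m hm (m - n + j)]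
  by_cases h1 : m ∣ j <;> by_cases h2 : m ∣ (n + j) <;> by_cases h3 : m ∣ (m - n + j) <;>
    simp [h1, h2, h3] <;> field_simp <;> ring

set_option maxHeartbeats 1000000 in
lemma core_estimate (a : ℕ → ℍ) (f : ℍ → ℍ)
    (hsum : ∀ q : ℍ, ‖q‖ < 1 → HasSum (fun j => q ^ j * a j) (f q))
    (hlt : ∀ q : ℍ, ‖q‖ ≤ 1 → ‖f q‖ < 1)
    (n : ℕ) (hn : 1 ≤ n) (v : ℍ) (hv : ‖v‖ = 1)
    (r : ℝ) (hr0 : 0 < r) (hr1 : r < 1) :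
    ‖a 0 + (r ^ n / 2) • (v * a n)‖ ≤ 1 := by
  obtain ⟨I', hI', mu, hmu, hlift⟩ := exists_lift_eq (-v) (by rw [norm_neg]; exact hv)
  set Φ := Complex.liftAux I' hI' with hΦdef
  set lam : ℂ := (starRingEnd ℂ) mu with hlamdef
  have hlam : ‖lam‖ = 1 := by rw [hlamdef, Complex.norm_conj]; exact hmu
  have hconjlam : (starRingEnd ℂ) lam = mu := by rw [hlamdef, Complex.conj_conj]
  -- bound on coefficients
  obtain ⟨ρ, hρr, hρ1, hρ0⟩ : ∃ ρ : ℝ, r < ρ ∧ ρ < 1 ∧ 0 < ρ :=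
    ⟨(1 + r) / 2, by linarith, by linarith, by linarith⟩
  have hsummρ : Summable (fun j => ((ρ : ℍ)) ^ j * a j) := by
    refine (hsum ((ρ : ℝ) : ℍ) ?_).summable
    rw [Quaternion.norm_coe, Real.norm_eq_abs, abs_of_pos hρ0]; exact hρ1
  have hbdd : BddAbove (Set.range fun j => ‖((ρ : ℍ)) ^ j * a j‖) :=
    (hsummρ.tendsto_atTop_zero.norm.bddAbove_range)
  obtain ⟨C, hC⟩ := hbdd
  have hC' : ∀ j, ρ ^ j * ‖a j‖ ≤ C := by
    intro j
    have := hC (Set.mem_range_self j)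
    rwa [norm_mul, norm_pow, Quaternion.norm_coe, Real.norm_eq_abs, abs_of_pos hρ0] at this
  have hC0 : 0 ≤ C := le_trans (by positivity) (hC' 0)
  set s : ℝ := r / ρ with hsdef
  have hs0 : 0 < s := div_pos hr0 hρ0
  have hs1 : s < 1 := (div_lt_one hρ0).mpr hρr
  refine le_of_forall_pos_le_add ?_
  intro ε hε
  set δ : ℝ := ε * (1 - s) / (2 * C + 1) with hδdef
  have hs1' : 0 < 1 - s := by linarith
  have hδ0 : 0 < δ := by positivity
  obtain ⟨k₀, hk₀⟩ := exists_pow_lt_of_lt_one hδ0 hs1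
  -- choice of m
  set M : ℕ := max k₀ (n + 1) with hMdef
  set m : ℕ := n + M with hmdef
  have hm : m ≠ 0 := by omega
  have hMn : n < M := by
    have := le_max_right k₀ (n + 1); omega
  have hnm : n ≤ m := by omega
  have hMm : m - n = M := by omega
  have hnmlt : n < m := by omega
  have h2n : 2 * n < m := by omega
  set ζ : ℂ := Complex.exp (2 * Real.pi * Complex.I / m) with hζdef
  set K : ℕ → ℝ := fun k => 1 - (lam * (ζ ^ n) ^ k).re with hKdef
  set z : ℕ → ℂ := fun k => ζ ^ k with hzdef
  have habsK : ∀ k, ‖lam * (ζ ^ n) ^ k‖ = 1 := by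
    intro k
    rw [norm_mul, hlam, one_mul, ← pow_mul]
    exact abs_zeta_pow m hm (n * k)
  have hK0 : ∀ k, 0 ≤ K k := by
    intro k
    have h1 := Complex.abs_re_le_norm (lam * (ζ ^ n) ^ k)
    rw [habsK k] at h1
    rw [hKdef]
    have := abs_le.mp h1
    linarith [this.2]
  have hK2 : ∀ k, K k ≤ 2 := by
    intro k
    have h1 := Complex.abs_re_le_norm (lam * (ζ ^ n) ^ k)
    rw [habsK k] at h1
    have := abs_le.mp h1
    rw [hKdef]; linarith [this.1]
  -- the average
  have hS := avg_hasSum a f hsum I' hI' r hr0.le hr1 K m hm z (fun k => abs_zeta_pow m hm k)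
  set S : ℍ := ∑ k ∈ Finset.range m, (K k / m) • f (Φ ((r : ℂ) * z k)) with hSdef
  set c : ℕ → ℂ := fun j => ∑ k ∈ Finset.range m, ((K k : ℂ) / m) * (z k) ^ j with hcdef
  set h : ℕ → ℍ := fun j => Φ ((r : ℂ) ^ j * c j) * a j with hhdef
  have hSsum : HasSum h S := hS
  -- coefficient values
  have hc : ∀ j, c j = (if m ∣ j then 1 else 0) - (lam / 2) * (if m ∣ (n + j) then 1 else 0)
      - ((starRingEnd ℂ) lam / 2) * (if m ∣ (m - n + j) then 1 else 0) :=
    fun j => coeff_eval m n hm hnm lam j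
  have hndvd : ∀ N : ℕ, 0 < N → N < m → ¬ m ∣ N := by
    intro N h1 h2 hd
    exact absurd (Nat.le_of_dvd h1 hd) (by omega)
  have hMdvd : ∀ j : ℕ, j < M → j ≠ n → ¬ m ∣ (M + j) := by
    intro j hj hjn hd
    have h1 : M + j ≠ 0 := by omega
    have h2 : M + j < 2 * m := by omega
    have := Nat.eq_of_dvd_of_lt_two_mul h1 hd h2
    omega
  have hc0 : c 0 = 1 := by
    rw [hc 0, if_pos (dvd_zero m), if_neg (by rw [Nat.add_zero]; exact hndvd n hn hnmlt),
      if_neg (by rw [Nat.add_zero, hMm]; exact hndvd M (by omega) (by omega))]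
    ring
  have hcn : c n = -((starRingEnd ℂ) lam / 2) := by
    rw [hc n, if_neg (hndvd n hn hnmlt), if_neg (by
        have : n + n = 2 * n := by ring
        rw [this]; exact hndvd (2 * n) (by omega) h2n),
      if_pos (by rw [hMm]; exact ⟨1, by omega⟩)]
    ring
  have hcz : ∀ j, j < M → j ≠ 0 → j ≠ n → c j = 0 := by
    intro j hj hj0 hjn
    rw [hc j, if_neg (hndvd j (by omega) (by omega)),
      if_neg (hndvd (n + j) (by omega) (by omega)),
      if_neg (by rw [hMm]; exact hMdvd j hj hjn)]
    ring
  have hcabs : ∀ j, ‖c j‖ ≤ 2 := by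
    intro j
    rw [hc j]
    have e1 : ‖(if m ∣ j then (1:ℂ) else 0)‖ ≤ 1 := by
      split <;> simp
    have e2 : ‖(lam / 2) * (if m ∣ (n + j) then (1:ℂ) else 0)‖ ≤ 1 / 2 := by
      rw [norm_mul, norm_div, hlam]
      split <;> simp
    have e3 : ‖((starRingEnd ℂ) lam / 2) * (if m ∣ (m - n + j) then (1:ℂ) else 0)‖
        ≤ 1 / 2 := by
      rw [norm_mul, norm_div, Complex.norm_conj, hlam]
      split <;> simp
    calc ‖(if m ∣ j then (1:ℂ) else 0) - (lam / 2) * (if m ∣ (n + j) then 1 else 0)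
          - ((starRingEnd ℂ) lam / 2) * (if m ∣ (m - n + j) then 1 else 0)‖
        ≤ ‖(if m ∣ j then (1:ℂ) else 0) - (lam / 2) * (if m ∣ (n + j) then 1 else 0)‖
          + ‖((starRingEnd ℂ) lam / 2) * (if m ∣ (m - n + j) then (1:ℂ) else 0)‖ :=
          norm_sub_le _ _
      _ ≤ (‖(if m ∣ j then (1:ℂ) else 0)‖ + ‖(lam / 2) * (if m ∣ (n + j) then (1:ℂ) else 0)‖)
          + ‖((starRingEnd ℂ) lam / 2) * (if m ∣ (m - n + j) then (1:ℂ) else 0)‖ := by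
          gcongr
          exact norm_sub_le _ _
      _ ≤ 2 := by
        have e1' : ‖(if m ∣ j then (1:ℂ) else 0)‖ ≤ 1 := by split <;> simp
        have e2' : ‖(lam / 2) * (if m ∣ (n + j) then (1:ℂ) else 0)‖ ≤ 1/2 := by
          rw [norm_mul, norm_div, hlam]
          split <;> simp
        have e3' : ‖((starRingEnd ℂ) lam / 2) * (if m ∣ (m - n + j) then (1:ℂ) else 0)‖ ≤ 1/2 := by
          have hcl : ‖(starRingEnd ℂ) lam‖ = 1 := by
            rw [Complex.norm_conj, hlam]
          rw [norm_mul, norm_div, hcl]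
          split <;> simp
        linarith
  have hΦnorm : ∀ w : ℂ, ‖Φ w‖ = ‖w‖ := fun w => norm_liftAux I' hI' w
  -- values of h
  have hh0 : h 0 = a 0 := by
    simp only [hhdef, pow_zero, hc0, mul_one, one_mul, map_one]
  have hhn : h n = (r ^ n / 2) • (v * a n) := by
    simp only [hhdef]
    rw [hcn, hconjlam]
    have e : (r : ℂ) ^ n * -(mu / 2) = ((-(r ^ n / 2) : ℝ)) • mu := by
      rw [Complex.real_smul]; push_cast; ring
    rw [e, map_smul, hlift, smul_mul_assoc, neg_mul, smul_neg, neg_smul, neg_neg]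
  have hhz : ∀ j, j < M → j ≠ 0 → j ≠ n → h j = 0 := by
    intro j hj hj0 hjn
    simp only [hhdef]
    rw [hcz j hj hj0 hjn, mul_zero, map_zero, zero_mul]
  -- splitting the sum
  have hsummh : Summable h := hSsum.summable
  have hsplit := Summable.sum_add_tsum_nat_add M hsummh
  have htsum : ∑' j, h j = S := hSsum.tsum_eq
  have hfin : ∑ j ∈ Finset.range M, h j = a 0 + (r ^ n / 2) • (v * a n) := by
    have hcong : ∀ j ∈ Finset.range M, h j =
        (if j = 0 then a 0 else 0) + (if j = n then (r ^ n / 2) • (v * a n) else 0) := by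
      intro j hj
      rcases eq_or_ne j 0 with rfl | hj0
      · rw [hh0, if_pos rfl, if_neg (by omega)]; rw [add_zero]
      · rcases eq_or_ne j n with rfl | hjn
        · rw [hhn, if_neg hj0, if_pos rfl, zero_add]
        · rw [hhz j (Finset.mem_range.mp hj) hj0 hjn, if_neg hj0, if_neg hjn, add_zero]
    rw [Finset.sum_congr rfl hcong, Finset.sum_add_distrib]
    rw [Finset.sum_ite_eq' (Finset.range M) 0 (fun _ => a 0),
      Finset.sum_ite_eq' (Finset.range M) n (fun _ => (r ^ n / 2) • (v * a n))]
    rw [if_pos (Finset.mem_range.mpr (by omega)), if_pos (Finset.mem_range.mpr hMn)]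
  -- tail bound
  have hbound : ∀ j, ‖h (j + M)‖ ≤ (2 * C * s ^ M) * s ^ j := by
    intro j
    simp only [hhdef]
    rw [norm_mul, hΦnorm]
    have h1 : ‖(r : ℂ) ^ (j + M) * c (j + M)‖ ≤ r ^ (j + M) * 2 := by
      rw [norm_mul, norm_pow, Complex.norm_real, Real.norm_eq_abs, abs_of_pos hr0]
      exact mul_le_mul_of_nonneg_left (hcabs _) (by positivity)
    have h2 : ‖a (j + M)‖ ≤ C / ρ ^ (j + M) := by
      rw [le_div_iff₀ (pow_pos hρ0 _)]
      linarith [hC' (j + M)]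
    calc ‖(r : ℂ) ^ (j + M) * c (j + M)‖ * ‖a (j + M)‖
        ≤ (r ^ (j + M) * 2) * (C / ρ ^ (j + M)) :=
          mul_le_mul h1 h2 (norm_nonneg _) (by positivity)
      _ = (2 * C * s ^ M) * s ^ j := by
          have e : (r ^ (j + M) * 2) * (C / ρ ^ (j + M)) = 2 * C * (r / ρ) ^ (j + M) := by
            rw [div_pow]; ring
          rw [e, ← hsdef, pow_add]; ring
  have hsummtail : Summable (fun j => h (j + M)) := (summable_nat_add_iff M).mpr hsummh
  have hsummnorm : Summable (fun j => ‖h (j + M)‖) := by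
    refine Summable.of_nonneg_of_le (fun j => norm_nonneg _) hbound ?_
    exact (summable_geometric_of_lt_one hs0.le hs1).mul_left _
  have htail : ‖∑' j, h (j + M)‖ ≤ ε := by
    have h1 : ‖∑' j, h (j + M)‖ ≤ ∑' j, ‖h (j + M)‖ := norm_tsum_le_tsum_norm hsummnorm
    have h2 : ∑' j, ‖h (j + M)‖ ≤ ∑' j : ℕ, (2 * C * s ^ M) * s ^ j :=
      Summable.tsum_le_tsum hbound hsummnorm ((summable_geometric_of_lt_one hs0.le hs1).mul_left _)
    have h3 : ∑' j : ℕ, (2 * C * s ^ M) * s ^ j = 2 * C * s ^ M * (1 - s)⁻¹ := by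
      rw [tsum_mul_left, tsum_geometric_of_lt_one hs0.le hs1]
    have h4 : s ^ M ≤ s ^ k₀ := pow_le_pow_of_le_one hs0.le hs1.le (le_max_left _ _)
    have h5 : s ^ k₀ < δ := hk₀
    have h6 : 2 * C * s ^ M * (1 - s)⁻¹ ≤ ε := by
      have hpos : (0:ℝ) < 2 * C + 1 := by linarith
      have hlt' : s ^ M < ε * (1 - s) / (2 * C + 1) := by
        rw [hδdef] at h5; exact lt_of_le_of_lt h4 h5
      have h7 : s ^ M * (2 * C + 1) < ε * (1 - s) := by
        rw [← lt_div_iff₀ hpos]; exact hlt'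
      rw [mul_inv_le_iff₀ hs1']
      nlinarith [pow_nonneg hs0.le M]
    linarith
  -- norm of S
  have hc0' : c 0 = ∑ k ∈ Finset.range m, ((K k : ℝ) : ℂ) / m := by
    simp only [hcdef, pow_zero, mul_one]
  have hKsum : ∑ k ∈ Finset.range m, K k / m = 1 := by
    have hcomplex : ((∑ k ∈ Finset.range m, K k / m : ℝ) : ℂ) = 1 := by
      push_cast
      rw [← hc0', hc0]
    exact_mod_cast hcomplex
  have hSle : ‖S‖ ≤ 1 := by
    have hq1 : ∀ k, ‖Φ ((r : ℂ) * z k)‖ ≤ 1 := by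
      intro k
      rw [hΦnorm, norm_mul, Complex.norm_real, Real.norm_eq_abs, abs_of_pos hr0, hzdef]
      rw [abs_zeta_pow m hm k, mul_one]
      exact hr1.le
    calc ‖S‖ ≤ ∑ k ∈ Finset.range m, ‖(K k / m) • f (Φ ((r : ℂ) * z k))‖ := by
          rw [hSdef]; exact norm_sum_le _ _
      _ ≤ ∑ k ∈ Finset.range m, K k / m := by
          refine Finset.sum_le_sum fun k _ => ?_
          rw [norm_smul, Real.norm_eq_abs,
            abs_of_nonneg (div_nonneg (hK0 k) (Nat.cast_nonneg m))]
          exact mul_le_of_le_one_right (div_nonneg (hK0 k) (Nat.cast_nonneg m))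
            (hlt _ (hq1 k)).le
      _ = 1 := hKsum
  -- conclusion
  have hkey : a 0 + (r ^ n / 2) • (v * a n) = S - ∑' j, h (j + M) := by
    rw [← hfin, ← htsum, ← hsplit]
    abel
  rw [hkey]
  calc ‖S - ∑' j, h (j + M)‖ ≤ ‖S‖ + ‖∑' j, h (j + M)‖ := norm_sub_le _ _
    _ ≤ 1 + ε := add_le_add hSle htail

lemma a0_eq_f0 (a : ℕ → ℍ) (f : ℍ → ℍ)
    (hsum : ∀ q : ℍ, ‖q‖ < 1 → HasSum (fun j => q ^ j * a j) (f q)) : a 0 = f 0 := by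
  have h1 : HasSum (fun j => (0 : ℍ) ^ j * a j) (f 0) := hsum 0 (by simp)
  have h2 : HasSum (fun j => (0 : ℍ) ^ j * a j) ((0 : ℍ) ^ 0 * a 0) :=
    hasSum_single 0 (fun b hb => by rw [zero_pow hb, zero_mul])
  have := h2.unique h1
  rwa [pow_zero, one_mul] at this

lemma coeff_bound (a : ℕ → ℍ) (f : ℍ → ℍ)
    (hsum : ∀ q : ℍ, ‖q‖ < 1 → HasSum (fun j => q ^ j * a j) (f q))
    (hlt : ∀ q : ℍ, ‖q‖ ≤ 1 → ‖f q‖ < 1)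
    (n : ℕ) (hn : 1 ≤ n) : ‖a n‖ ≤ 2 * (1 - ‖a 0‖) := by
  have ht1 : ‖a 0‖ < 1 := by
    rw [a0_eq_f0 a f hsum]
    exact hlt 0 (by simp)
  by_cases han : a n = 0
  · rw [han, norm_zero]; linarith
  -- the aligned unit
  obtain ⟨u0, hu0, ha0u0⟩ : ∃ u0 : ℍ, ‖u0‖ = 1 ∧ a 0 = ‖a 0‖ • u0 := by
    by_cases h : a 0 = 0
    · exact ⟨1, norm_one, by rw [h, norm_zero, zero_smul]⟩
    · refine ⟨‖a 0‖⁻¹ • a 0, ?_, ?_⟩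
      · rw [norm_smul, Real.norm_eq_abs, abs_of_pos (inv_pos.mpr (norm_pos_iff.mpr h))]
        field_simp
      · rw [smul_smul, mul_inv_cancel₀ (norm_ne_zero_iff.mpr h), one_smul]
  set v : ℍ := ‖a n‖ • (u0 * (a n)⁻¹) with hvdef
  have hv : ‖v‖ = 1 := by
    rw [hvdef, norm_smul, norm_mul, norm_inv, hu0, Real.norm_eq_abs,
      abs_of_pos (norm_pos_iff.mpr han)]
    field_simp
  have hva : v * a n = ‖a n‖ • u0 := by
    rw [hvdef, smul_mul_assoc, mul_assoc, inv_mul_cancel₀ han, mul_one]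
  have hkey : ∀ r : ℝ, 0 < r → r < 1 → ‖a 0‖ + r ^ n / 2 * ‖a n‖ ≤ 1 := by
    intro r hr0 hr1
    have := core_estimate a f hsum hlt n hn v hv r hr0 hr1
    rw [hva, smul_smul, ha0u0, ← add_smul] at this
    rw [norm_smul, Real.norm_eq_abs, hu0, mul_one,
      abs_of_nonneg (by positivity : (0:ℝ) ≤ ‖a 0‖ + r ^ n / 2 * ‖a n‖)] at this
    linarith [this]
  -- limit r → 1⁻
  have hlim : Filter.Tendsto (fun r : ℝ => ‖a 0‖ + r ^ n / 2 * ‖a n‖) (nhdsWithin 1 (Set.Iio 1))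
      (nhds (‖a 0‖ + 1 ^ n / 2 * ‖a n‖)) :=
    ((continuous_const.add (((continuous_pow n).div_const 2).mul continuous_const)).tendsto 1).mono_left
      nhdsWithin_le_nhds
  have hev : ∀ᶠ r in nhdsWithin (1:ℝ) (Set.Iio 1), ‖a 0‖ + r ^ n / 2 * ‖a n‖ ≤ 1 := by
    filter_upwards [Ioo_mem_nhdsLT_of_mem (by constructor <;> norm_num : (1:ℝ) ∈ Set.Ioc 0 1)]
      with r hr
    exact hkey r hr.1 hr.2
  have := le_of_tendsto hlim hev
  rw [one_pow] at this
  linarith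

/-- Weak Bohr theorem for slice regular functions: the Bohr inequality holds for
`‖q‖ ≤ 1/6`. -/
theorem weak_bohr_theorem
    (a : ℕ → ℍ) (f : ℍ → ℍ)
    (hBohr : BohrHypotheses f a) :
    ∀ q : ℍ, ‖q‖ ≤ 1 / 6 →
      Summable (fun n => ‖q ^ n * a n‖) ∧ ∑' n, ‖q ^ n * a n‖ < 1 := by
  obtain ⟨-, hsum, hlt⟩ := hBohr
  intro q hq
  set t : ℝ := ‖a 0‖ with htdef
  have ht1 : t < 1 := by
    rw [htdef, a0_eq_f0 a f hsum]
    exact hlt 0 (by simp)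
  have ht0 : 0 ≤ t := norm_nonneg _
  have hb : ∀ k : ℕ, ‖q ^ (k + 1) * a (k + 1)‖ ≤ (2 * (1 - t)) * (1 / 6 : ℝ) ^ (k + 1) := by
    intro k
    rw [norm_mul, norm_pow]
    calc ‖q‖ ^ (k + 1) * ‖a (k + 1)‖ ≤ (1 / 6 : ℝ) ^ (k + 1) * (2 * (1 - t)) := by
          refine mul_le_mul ?_ (coeff_bound a f hsum hlt (k + 1) (by omega)) (norm_nonneg _)
            (by positivity)
          exact pow_le_pow_left₀ (norm_nonneg q) hq (k + 1)
      _ = (2 * (1 - t)) * (1 / 6 : ℝ) ^ (k + 1) := by ring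
  have hgsum : Summable (fun k : ℕ => (2 * (1 - t)) * (1 / 6 : ℝ) ^ (k + 1)) := by
    have : (fun k : ℕ => (2 * (1 - t)) * (1 / 6 : ℝ) ^ (k + 1))
        = fun k : ℕ => ((2 * (1 - t)) * (1 / 6)) * (1 / 6 : ℝ) ^ k := by
      funext k; rw [pow_succ]; ring
    rw [this]
    exact (summable_geometric_of_lt_one (by norm_num) (by norm_num)).mul_left _
  have hstail : Summable (fun k : ℕ => ‖q ^ (k + 1) * a (k + 1)‖) :=
    Summable.of_nonneg_of_le (fun k => norm_nonneg _) hb hgsum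
  have hsfull : Summable (fun k : ℕ => ‖q ^ k * a k‖) := (summable_nat_add_iff 1).mp hstail
  refine ⟨hsfull, ?_⟩
  have hsplit := Summable.sum_add_tsum_nat_add 1 hsfull
  have h0 : ∑ k ∈ Finset.range 1, ‖q ^ k * a k‖ = t := by
    rw [Finset.sum_range_one, pow_zero, one_mul, htdef]
  have htail : ∑' k : ℕ, ‖q ^ (k + 1) * a (k + 1)‖ ≤ 2 * (1 - t) / 5 := by
    have h1 : ∑' k : ℕ, ‖q ^ (k + 1) * a (k + 1)‖
        ≤ ∑' k : ℕ, (2 * (1 - t)) * (1 / 6 : ℝ) ^ (k + 1) := Summable.tsum_le_tsum hb hstail hgsum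
    have h2 : ∑' k : ℕ, (2 * (1 - t)) * (1 / 6 : ℝ) ^ (k + 1) = 2 * (1 - t) / 5 := by
      have e : (fun k : ℕ => (2 * (1 - t)) * (1 / 6 : ℝ) ^ (k + 1))
          = fun k : ℕ => ((2 * (1 - t)) * (1 / 6)) * (1 / 6 : ℝ) ^ k := by
        funext k; rw [pow_succ]; ring
      rw [e, tsum_mul_left, tsum_geometric_of_lt_one (by norm_num) (by norm_num)]
      norm_num
      ring
    linarith
  have : ∑' k : ℕ, ‖q ^ k * a k‖ = t + ∑' k : ℕ, ‖q ^ (k + 1) * a (k + 1)‖ := by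
    rw [← hsplit, h0]
  rw [this]
  linarith
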